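/- For two unit-speed flows crossing at encounter angle θ with 0 < θ < π, a lateral displacement of magnitude d perpendicular to one flow corresponds to a displacement of magnitude d/|sin(θ/2)| along the direction bisecting the two flow directions; equivalently, if a point must be moved distance d in the direction perpendicular to the relative velocity of the two flows, and the motion is constrained to be perpendicular to the aircraft's own velocity, the required motion has magnitude d/|sin(θ/2)|. -/

import Mathlib

open scoped RealInnerProductSpace

/-- Arbitrary encounter angle geometry: an aircraft in flow 1 (direction
`u₁ = (1,0)`), constrained to displace along the unit normal `n = (0,1)` to
its own velocity, needs a displacement of magnitude `|x| = d / |sin (θ/2)|` to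
achieve component `d` in a unit direction `w` perpendicular to the relative
velocity `u₁ − u₂`, where `u₂ = (cos θ, sin θ)` and `0 < θ < π`. -/
theorem encounter_angle_deviation (θ d x : ℝ) (hθ : θ ∈ Set.Ioo 0 Real.pi)
    (hd : 0 ≤ d) (u₁ u₂ n w : EuclideanSpace ℝ (Fin 2))
    (hu₁ : u₁ = !₂[1, 0]) (hu₂ : u₂ = !₂[Real.cos θ, Real.sin θ])
    (hn : n = !₂[0, 1])
    (hw : ‖w‖ = 1) (hperp : ⟪w, u₁ - u₂⟫ = 0)
    (hx : ⟪x • n, w⟫ = d) :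
    |x| = d / |Real.sin (θ / 2)| := by
  obtain ⟨hθ0, hθπ⟩ := hθ
  subst hu₁ hu₂ hn
  set s := Real.sin (θ / 2) with hs_def
  set c := Real.cos (θ / 2) with hc_def
  have hs : 0 < s := Real.sin_pos_of_pos_of_lt_pi (by linarith) (by linarith [Real.pi_pos])
  have hsin : Real.sin θ = 2 * s * c := by
    rw [show θ = 2 * (θ / 2) by ring, Real.sin_two_mul]
  have hpyth : s ^ 2 + c ^ 2 = 1 := Real.sin_sq_add_cos_sq _
  have hcos : Real.cos θ = 1 - 2 * s ^ 2 := by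
    rw [show θ = 2 * (θ / 2) by ring, Real.cos_two_mul]; nlinarith
  have h1 : w 0 * (1 - Real.cos θ) + w 1 * (0 - Real.sin θ) = 0 := by
    simpa [PiLp.inner_apply, Fin.sum_univ_two, mul_comm] using hperp
  have h2 : (w 0) ^ 2 + (w 1) ^ 2 = 1 := by
    have := congrArg (· ^ 2) hw
    simpa [EuclideanSpace.norm_eq, Fin.sum_univ_two, Real.sq_sqrt,
      add_nonneg (sq_nonneg (w 0)) (sq_nonneg (w 1)), sq_abs] using this
  have h3 : x * w 1 = d := by
    simpa [PiLp.inner_apply, Fin.sum_univ_two, mul_comm] using hx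
  -- From h1: w 0 * 2 s² = w 1 * 2 s c, so w 0 * s = w 1 * c
  have h4 : w 0 * s = w 1 * c := by
    have : w 0 * (2 * s ^ 2) = w 1 * (2 * s * c) := by
      rw [hcos, hsin] at h1; ring_nf at h1 ⊢; linarith
    have := mul_left_cancel₀ (by positivity : (2 : ℝ) * s ≠ 0)
      (by ring_nf; ring_nf at this; linarith : 2 * s * (w 0 * s) = 2 * s * (w 1 * c))
    exact this
  have h4sq : (w 0 * s) ^ 2 = (w 1 * c) ^ 2 := by rw [h4]
  have h5 : (w 1) ^ 2 = s ^ 2 := by nlinarith [h4sq, h2, hpyth]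
  have h6 : |w 1| = s := by
    rw [← Real.sqrt_sq_eq_abs, h5, Real.sqrt_sq hs.le]
  have hxd : |x| * s = d := by
    have : |x * w 1| = d := by rw [h3]; exact abs_of_nonneg hd
    rw [abs_mul, h6] at this; exact this
  rw [abs_of_pos hs]
  field_simp [hs.ne']
  linarith
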